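/- Contraction of the CVaR Bellman operator (Lemma 1): for any two bounded functions Q1, Q2 : S × A × [0,1] → ℝ, and for all s ∈ S, a ∈ A and y ∈ (0,1], one has |T[Q1](s,a,y) − T[Q2](s,a,y)| ≤ γ · sup_{(s',a',y') ∈ S × A × [0,1]} |Q1(s',a',y') − Q2(s',a',y')|. -/

import Mathlib

noncomputable section

/-- The CVaR risk envelope `U(y, p)`. -/
def riskEnv {Ω : Type*} [Fintype Ω] (y : ℝ) (p : Ω → ℝ) : Set (Ω → ℝ) :=
  {ξ | (∀ ω, 0 ≤ ξ ω ∧ ξ ω ≤ 1 / y) ∧ ∑ ω, ξ ω * p ω = 1}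

/-- The CVaR Bellman operator `T`. -/
def bellman {S A : Type*} [Fintype S] [Fintype A] [Nonempty A]
    (P : S → A → S → ℝ) (c : S → A → ℝ) (γ : ℝ)
    (Q : S → A → ℝ → ℝ) (s : S) (a : A) (y : ℝ) : ℝ :=
  c s a + γ * Finset.univ.inf' Finset.univ_nonempty (fun a' : A =>
    sSup ((fun ξ : S → ℝ => ∑ s', ξ s' * P s a s' * Q s' a' (y * ξ s')) ''
      riskEnv y (P s a)))

/-- Contraction of the CVaR Bellman operator (Lemma 1). -/
theorem bellman_contraction {S A : Type*} [Fintype S] [Fintype A] [Nonempty S] [Nonempty A]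
    (P : S → A → S → ℝ)
    (hP : ∀ s a, (∀ s', 0 ≤ P s a s') ∧ ∑ s', P s a s' = 1)
    (c : S → A → ℝ) {γ : ℝ} (hγ0 : 0 ≤ γ) (hγ1 : γ < 1)
    (Q1 Q2 : S → A → ℝ → ℝ)
    (hb1 : ∃ B : ℝ, ∀ s a, ∀ y ∈ Set.Icc (0:ℝ) 1, |Q1 s a y| ≤ B)
    (hb2 : ∃ B : ℝ, ∀ s a, ∀ y ∈ Set.Icc (0:ℝ) 1, |Q2 s a y| ≤ B) :
    ∀ s a, ∀ y ∈ Set.Ioc (0:ℝ) 1,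
      |bellman P c γ Q1 s a y - bellman P c γ Q2 s a y|
        ≤ γ * sSup {d : ℝ | ∃ s' a', ∃ y' ∈ Set.Icc (0:ℝ) 1,
            d = |Q1 s' a' y' - Q2 s' a' y'|} := by
  obtain ⟨B1, hB1⟩ := hb1
  obtain ⟨B2, hB2⟩ := hb2
  set D := sSup {d : ℝ | ∃ s' a', ∃ y' ∈ Set.Icc (0:ℝ) 1,
      d = |Q1 s' a' y' - Q2 s' a' y'|} with hDdef
  have hbddD : BddAbove {d : ℝ | ∃ s' a', ∃ y' ∈ Set.Icc (0:ℝ) 1,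
      d = |Q1 s' a' y' - Q2 s' a' y'|} := by
    refine ⟨B1 + B2, ?_⟩
    rintro d ⟨s', a', y', hy', rfl⟩
    calc |Q1 s' a' y' - Q2 s' a' y'| ≤ |Q1 s' a' y'| + |Q2 s' a' y'| := abs_sub _ _
      _ ≤ B1 + B2 := add_le_add (hB1 _ _ _ hy') (hB2 _ _ _ hy')
  have hDle : ∀ s' a' y', y' ∈ Set.Icc (0:ℝ) 1 → |Q1 s' a' y' - Q2 s' a' y'| ≤ D :=
    fun s' a' y' h => le_csSup hbddD ⟨s', a', y', h, rfl⟩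
  intro s a y hy
  obtain ⟨hy0, hy1⟩ := hy
  -- the constant-one function is in the risk envelope
  have hone : (fun _ : S => (1:ℝ)) ∈ riskEnv y (P s a) := by
    constructor
    · intro ω
      refine ⟨zero_le_one, ?_⟩
      show (1:ℝ) ≤ 1 / y
      rw [le_div_iff₀ hy0, one_mul]; exact hy1
    · simpa using (hP s a).2
  have hne : (riskEnv y (P s a)).Nonempty := ⟨_, hone⟩
  -- for ξ in the envelope, y * ξ s' ∈ [0,1]
  have hyx : ∀ ξ ∈ riskEnv y (P s a), ∀ s', y * ξ s' ∈ Set.Icc (0:ℝ) 1 := by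
    intro ξ hξ s'
    obtain ⟨hbox, _⟩ := hξ
    refine ⟨mul_nonneg (le_of_lt hy0) (hbox s').1, ?_⟩
    calc y * ξ s' ≤ y * (1 / y) := by
          exact mul_le_mul_of_nonneg_left (hbox s').2 (le_of_lt hy0)
      _ = 1 := by field_simp
  -- weights are nonnegative and sum to one
  have hwnn : ∀ ξ ∈ riskEnv y (P s a), ∀ s', 0 ≤ ξ s' * P s a s' :=
    fun ξ hξ s' => mul_nonneg (hξ.1 s').1 ((hP s a).1 s')
  have hwsum : ∀ ξ ∈ riskEnv y (P s a), ∑ s', ξ s' * P s a s' = 1 :=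
    fun ξ hξ => hξ.2
  -- boundedness of the image sets
  have hbddim : ∀ (F : S → A → ℝ → ℝ) (B : ℝ),
      (∀ s₀ a₀, ∀ y' ∈ Set.Icc (0:ℝ) 1, |F s₀ a₀ y'| ≤ B) → ∀ a' : A,
      BddAbove ((fun ξ : S → ℝ => ∑ s', ξ s' * P s a s' * F s' a' (y * ξ s')) ''
        riskEnv y (P s a)) := by
    intro F B hB a'
    refine ⟨B, ?_⟩
    rintro x ⟨ξ, hξ, rfl⟩
    calc ∑ s', ξ s' * P s a s' * F s' a' (y * ξ s')
        ≤ ∑ s', ξ s' * P s a s' * B := by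
          refine Finset.sum_le_sum fun s' _ => ?_
          exact mul_le_mul_of_nonneg_left
            (le_trans (le_abs_self _) (hB _ _ _ (hyx ξ hξ s'))) (hwnn ξ hξ s')
      _ = B := by rw [← Finset.sum_mul, hwsum ξ hξ, one_mul]
  -- sSup comparison
  have hsup : ∀ (F G : S → A → ℝ → ℝ),
      (∀ s₀ a₀ y', y' ∈ Set.Icc (0:ℝ) 1 → F s₀ a₀ y' - G s₀ a₀ y' ≤ D) →
      ∀ a' : A, BddAbove ((fun ξ : S → ℝ =>
          ∑ s', ξ s' * P s a s' * G s' a' (y * ξ s')) '' riskEnv y (P s a)) →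
      sSup ((fun ξ : S → ℝ => ∑ s', ξ s' * P s a s' * F s' a' (y * ξ s')) ''
          riskEnv y (P s a))
        ≤ sSup ((fun ξ : S → ℝ => ∑ s', ξ s' * P s a s' * G s' a' (y * ξ s')) ''
          riskEnv y (P s a)) + D := by
    intro F G hFG a' hbdd
    refine csSup_le (hne.image _) ?_
    rintro x ⟨ξ, hξ, rfl⟩
    have h1 : ∑ s', ξ s' * P s a s' * F s' a' (y * ξ s')
        ≤ (∑ s', ξ s' * P s a s' * G s' a' (y * ξ s')) + D := by
      have : ∑ s', ξ s' * P s a s' * F s' a' (y * ξ s')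
          ≤ ∑ s', (ξ s' * P s a s' * G s' a' (y * ξ s') + ξ s' * P s a s' * D) := by
        refine Finset.sum_le_sum fun s' _ => ?_
        have := hFG s' a' (y * ξ s') (hyx ξ hξ s')
        nlinarith [hwnn ξ hξ s']
      rw [Finset.sum_add_distrib, ← Finset.sum_mul, hwsum ξ hξ, one_mul] at this
      exact this
    refine h1.trans (add_le_add_left ?_ D)
    exact le_csSup hbdd ⟨ξ, hξ, rfl⟩
  have hD12 : ∀ s₀ a₀ y', y' ∈ Set.Icc (0:ℝ) 1 → Q1 s₀ a₀ y' - Q2 s₀ a₀ y' ≤ D :=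
    fun s₀ a₀ y' h => le_trans (le_abs_self _) (hDle s₀ a₀ y' h)
  have hD21 : ∀ s₀ a₀ y', y' ∈ Set.Icc (0:ℝ) 1 → Q2 s₀ a₀ y' - Q1 s₀ a₀ y' ≤ D := by
    intro s₀ a₀ y' h
    have := hDle s₀ a₀ y' h
    rw [abs_sub_comm] at this
    exact le_trans (le_abs_self _) this
  set f1 : A → ℝ := fun a' => sSup ((fun ξ : S → ℝ =>
      ∑ s', ξ s' * P s a s' * Q1 s' a' (y * ξ s')) '' riskEnv y (P s a)) with hf1
  set f2 : A → ℝ := fun a' => sSup ((fun ξ : S → ℝ =>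
      ∑ s', ξ s' * P s a s' * Q2 s' a' (y * ξ s')) '' riskEnv y (P s a)) with hf2
  have hf12 : ∀ a', f1 a' ≤ f2 a' + D :=
    fun a' => hsup Q1 Q2 hD12 a' (hbddim Q2 B2 hB2 a')
  have hf21 : ∀ a', f2 a' ≤ f1 a' + D :=
    fun a' => hsup Q2 Q1 hD21 a' (hbddim Q1 B1 hB1 a')
  -- inf' comparison
  have hinf : |Finset.univ.inf' Finset.univ_nonempty f1
      - Finset.univ.inf' Finset.univ_nonempty f2| ≤ D := by
    rw [abs_sub_le_iff]
    constructor
    · obtain ⟨a2, _, ha2⟩ := Finset.exists_mem_eq_inf' Finset.univ_nonempty f2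
      have : Finset.univ.inf' Finset.univ_nonempty f1 ≤ f1 a2 + D := by
        have h := Finset.inf'_le f1 (Finset.mem_univ a2)
        have hD0 : f1 a2 ≤ f1 a2 + D := by
          have := (hf12 a2).trans (by linarith [hf21 a2] : f2 a2 + D ≤ f1 a2 + D + D)
          linarith
        linarith
      have h2 : Finset.univ.inf' Finset.univ_nonempty f1 ≤ f2 a2 + D :=
        le_trans (Finset.inf'_le f1 (Finset.mem_univ a2)) (hf12 a2)
      rw [← ha2] at h2
      linarith
    · obtain ⟨a1, _, ha1⟩ := Finset.exists_mem_eq_inf' Finset.univ_nonempty f1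
      have : Finset.univ.inf' Finset.univ_nonempty f2 ≤ f1 a1 + D :=
        le_trans (Finset.inf'_le _ (Finset.mem_univ a1)) (hf21 a1)
      rw [← ha1] at this
      linarith
  have hdiff : bellman P c γ Q1 s a y - bellman P c γ Q2 s a y
      = γ * (Finset.univ.inf' Finset.univ_nonempty f1
        - Finset.univ.inf' Finset.univ_nonempty f2) := by
    simp only [bellman, hf1, hf2]
    ring
  rw [hdiff, abs_mul, abs_of_nonneg hγ0]
  exact mul_le_mul_of_nonneg_left hinf hγ0
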